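/- arXiv:2505.13570 — 2 statements merged into one kernel-verified Lean document; each statement's English description precedes it below -/
import Mathlib

section
/- Let (a_i)_{i=1}^∞ be a nondecreasing sequence of positive reals with ∑_{i=1}^∞ 1/a_i < ∞ and define γ(s) = max_i a_i s_i for finitely supported sequences s of nonnegative integers. Then sup_s (∑_i s_i)/γ(s), over nonzero finitely supported s, equals ∑_{i=1}^∞ 1/a_i. -/
/-- For a nondecreasing sequence `a` of positive reals with `∑ 1/a_i < ∞` and the
anisotropic smoothness map `γ(s) = max_i a_i s_i`, the supremum over nonzero finitely
supported `s` of `(∑ i s_i)/γ(s)` equals `∑' i, 1 / a i`. -/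
theorem stmt_5 (a : ℕ → ℝ) (ha_pos : ∀ i, 0 < a i) (ha_mono : Monotone a)
    (ha_sum : Summable (fun i => 1 / a i)) :
    (⨆ s : {s : ℕ →₀ ℕ // s ≠ 0},
        (∑ i ∈ s.1.support, (s.1 i : ℝ)) /
          (s.1.support.sup' (Finsupp.support_nonempty_iff.mpr s.2)
            (fun i => a i * s.1 i)))
      = ∑' i, 1 / a i := by
  have hne : Nonempty {s : ℕ →₀ ℕ // s ≠ 0} := ⟨⟨Finsupp.single 0 1, by simp⟩⟩
  set T := ∑' i, 1 / a i with hT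
  set F : {s : ℕ →₀ ℕ // s ≠ 0} → ℝ := fun s =>
    (∑ i ∈ s.1.support, (s.1 i : ℝ)) /
      (s.1.support.sup' (Finsupp.support_nonempty_iff.mpr s.2)
        (fun i => a i * s.1 i)) with hF
  have hub : ∀ s, F s ≤ T := by
    rintro ⟨s, hs⟩
    have hsupp : s.support.Nonempty := Finsupp.support_nonempty_iff.mpr hs
    have hγpos : 0 < s.support.sup' hsupp (fun i => a i * s i) := by
      obtain ⟨i, hi⟩ := hsupp
      have h1 : (1:ℝ) ≤ (s i : ℝ) := by
        exact_mod_cast Nat.one_le_iff_ne_zero.2 (Finsupp.mem_support_iff.1 hi)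
      have : (0:ℝ) < a i * s i := mul_pos (ha_pos i) (by linarith)
      exact lt_of_lt_of_le this (Finset.le_sup' (fun i => a i * (s i : ℝ)) hi)
    rw [hF]
    simp only []
    rw [div_le_iff₀ hγpos]
    calc ∑ i ∈ s.support, (s i:ℝ)
        ≤ ∑ i ∈ s.support, (s.support.sup' hsupp (fun i => a i * s i)) * (1/a i) := by
          apply Finset.sum_le_sum
          intro i hi
          rw [mul_one_div, le_div_iff₀ (ha_pos i), mul_comm]
          exact Finset.le_sup' (fun i => a i * s i) hi
      _ = (s.support.sup' hsupp (fun i => a i * s i)) * ∑ i ∈ s.support, 1/a i := by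
          rw [Finset.mul_sum]
      _ ≤ (s.support.sup' hsupp (fun i => a i * s i)) * T := by
          apply mul_le_mul_of_nonneg_left _ hγpos.le
          exact Summable.sum_le_tsum _ (fun i _ => one_div_nonneg.mpr (ha_pos i).le) ha_sum
      _ = T * _ := mul_comm _ _
  have hbdd : BddAbove (Set.range F) := ⟨T, by rintro x ⟨s, rfl⟩; exact hub s⟩
  refine le_antisymm (ciSup_le hub) ?_
  refine Summable.tsum_le_of_sum_le ha_sum fun u => ?_
  set n := u.sup id + 1 with hn
  have hun : u ⊆ Finset.range n := fun i hi =>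
    Finset.mem_range.2 (Nat.lt_succ_of_le (Finset.le_sup (f := id) hi))
  refine (Finset.sum_le_sum_of_subset_of_nonneg hun
    (fun i _ _ => one_div_nonneg.mpr (ha_pos i).le)).trans ?_
  set P := ∑ i ∈ Finset.range n, 1/a i with hP
  have hPpos : 0 < P := Finset.sum_pos (fun i _ => one_div_pos.mpr (ha_pos i)) ⟨0, by simp [hn]⟩
  refine le_of_forall_lt fun c hc => ?_
  set c' := a (n-1) with hc'
  have hc'pos : 0 < c' := ha_pos _
  obtain ⟨M, hM⟩ := exists_nat_gt (max 1 (c * c' / (P - c)))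
  have hM1 : (1:ℝ) ≤ (M:ℝ) := le_of_lt (lt_of_le_of_lt (le_max_left _ _) hM)
  have hMpos : (0:ℝ) < M := lt_of_lt_of_le one_pos hM1
  have hMc : c * c' / (P - c) < M := lt_of_le_of_lt (le_max_right _ _) hM
  -- construct the finsupp
  set f : ℕ →₀ ℕ := Finsupp.onFinset (Finset.range n)
    (fun i => if i < n then ⌈(M:ℝ)/a i⌉₊ else 0)
    (fun i hi => Finset.mem_range.2 (by by_contra h; exact hi (if_neg h))) with hfdef
  have hfapp : ∀ i, f i = if i < n then ⌈(M:ℝ)/a i⌉₊ else 0 := fun i => rfl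
  have hsupp : f.support = Finset.range n := by
    ext i
    simp only [Finsupp.mem_support_iff, hfapp, Finset.mem_range]
    constructor
    · intro h; by_contra h'; exact h (if_neg h')
    · intro h
      rw [if_pos h]
      have : 0 < ⌈(M:ℝ)/a i⌉₊ := Nat.ceil_pos.mpr (div_pos hMpos (ha_pos i))
      omega
  have hfne : f.support.Nonempty := hsupp ▸ ⟨0, by simp [hn]⟩
  have hf0 : f ≠ 0 := Finsupp.support_nonempty_iff.mp hfne
  have hγle : f.support.sup' hfne (fun i => a i * f i) ≤ (M:ℝ) + c' := by
    apply Finset.sup'_le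
    intro i hi
    rw [hsupp] at hi
    have hin : i < n := Finset.mem_range.1 hi
    have h1 : (f i : ℝ) = (⌈(M:ℝ)/a i⌉₊ : ℝ) := by rw [hfapp, if_pos hin]
    have h2 : (⌈(M:ℝ)/a i⌉₊ : ℝ) < (M:ℝ)/a i + 1 :=
      Nat.ceil_lt_add_one (div_nonneg hMpos.le (ha_pos i).le)
    have h3 : a i ≤ c' := ha_mono (by omega)
    have h4 : a i * ((M:ℝ)/a i) = M := mul_div_cancel₀ _ (ha_pos i).ne'
    have := mul_lt_mul_of_pos_left h2 (ha_pos i)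
    rw [h1]
    nlinarith [ha_pos i]
  have hγpos : 0 < f.support.sup' hfne (fun i => a i * f i) := by
    obtain ⟨i, hi⟩ := hfne
    have h1 : (1:ℝ) ≤ (f i : ℝ) := by
      exact_mod_cast Nat.one_le_iff_ne_zero.2 (Finsupp.mem_support_iff.1 hi)
    exact lt_of_lt_of_le (mul_pos (ha_pos i) (lt_of_lt_of_le one_pos h1))
      (Finset.le_sup' (fun i => a i * (f i : ℝ)) hi)
  have hsumge : (M:ℝ) * P ≤ ∑ i ∈ f.support, (f i : ℝ) := by
    rw [hsupp, hP, Finset.mul_sum]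
    apply Finset.sum_le_sum
    intro i hi
    have hin : i < n := Finset.mem_range.1 hi
    rw [hfapp, if_pos hin]
    calc (M:ℝ) * (1/a i) = (M:ℝ)/a i := by ring
      _ ≤ (⌈(M:ℝ)/a i⌉₊ : ℝ) := Nat.le_ceil _
  have key : (M:ℝ) * P / ((M:ℝ) + c') ≤ F ⟨f, hf0⟩ := by
    rw [hF]
    exact div_le_div₀ (Finset.sum_nonneg (fun i _ => by positivity)) hsumge hγpos hγle
  have hcc : c < (M:ℝ) * P / ((M:ℝ) + c') := by
    rw [lt_div_iff₀ (by positivity)]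
    rw [div_lt_iff₀ (by linarith : (0:ℝ) < P - c)] at hMc
    nlinarith
  calc c < (M:ℝ) * P / ((M:ℝ) + c') := hcc
    _ ≤ F ⟨f, hf0⟩ := key
    _ ≤ ⨆ s, F s := le_ciSup hbdd _
end

section
/- Let (a_i)_{i=1}^∞ be a sequence of positive reals, J > 0, and α > 0 with α = ∑_i 1/a_i. Then ∑_{s} 2^{∑_i max(s_i − 1, 0)} ≤ 2^{αJ/(1+2α)}, where the sum ranges over all finitely supported sequences s of nonnegative integers satisfying (1 + 2α)·max_i a_i s_i < J. -/
open Finset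

lemma geom_aux (N : ℕ) : ∑ k ∈ Finset.range (N+1), (2:ℝ)^(k-1) = 2^N := by
  induction N with
  | zero => simp
  | succ N ih =>
    rw [Finset.sum_range_succ, ih, Nat.add_sub_cancel, pow_succ]
    ring

set_option maxHeartbeats 1000000 in
/-- Dyadic counting bound: if `α = ∑ 1/a_i > 0` and `J > 0`, then the sum of
`2^{∑ (s_i - 1)⁺}` over finitely supported `s` with `(1+2α) a_i s_i < J` for all `i`
is at most `2^{αJ/(1+2α)}`. -/
theorem stmt_6 (a : ℕ → ℝ) (ha_pos : ∀ i, 0 < a i) (J α : ℝ) (hJ : 0 < J)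
    (hα : 0 < α) (hαa : α = ∑' i, 1 / a i) :
    (∑' s : {s : ℕ →₀ ℕ // ∀ i, (1 + 2 * α) * (a i * s i) < J},
        (2 : ℝ) ^ (∑ i ∈ s.1.support, (s.1 i - 1)))
      ≤ (2 : ℝ) ^ (α * J / (1 + 2 * α)) := by
  set c := 1 + 2 * α with hc
  have hc0 : (0:ℝ) < c := by positivity
  have hsum : Summable (fun i => 1 / a i) := by
    by_contra h
    rw [tsum_eq_zero_of_not_summable h] at hαa
    linarith
  obtain ⟨n, hn⟩ : ∃ n, ∀ i ≥ n, 1 / a i < c / J := by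
    have h2 := hsum.tendsto_atTop_zero.eventually
      (gt_mem_nhds (show (0:ℝ) < c / J by positivity))
    exact Filter.eventually_atTop.mp h2
  set N : ℕ → ℕ := fun i => ⌊J / (c * a i)⌋₊ with hN
  have hBpos : ∀ i, 0 ≤ J / (c * a i) := by
    intro i
    have := ha_pos i
    positivity
  have hNs : ∀ (s : ℕ →₀ ℕ), (∀ i, c * (a i * s i) < J) → ∀ i, s i ≤ N i := by
    intro s hs i
    apply Nat.le_floor
    rw [le_div_iff₀ (by have := ha_pos i; positivity)]
    have := hs i
    nlinarith
  have hN0 : ∀ i, n ≤ i → N i = 0 := by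
    intro i hi
    apply Nat.floor_eq_zero.mpr
    rw [div_lt_one (by have := ha_pos i; positivity)]
    have h1 := hn i hi
    have h2 : 1 * J < c * a i := (div_lt_div_iff₀ (ha_pos i) hJ).mp h1
    linarith
  -- the index subtype
  have hfin : Finite {s : ℕ →₀ ℕ // ∀ i, c * (a i * s i) < J} := by
    apply Finite.of_injective
      (fun s : {s : ℕ →₀ ℕ // ∀ i, c * (a i * s i) < J} =>
        (fun i : Fin n => (⟨s.1 i.1, Nat.lt_succ_of_le (hNs s.1 s.2 i.1)⟩ : Fin (N i.1 + 1))))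
    intro s t h
    apply Subtype.ext
    ext i
    by_cases hi : i < n
    · have := congrFun h ⟨i, hi⟩
      simpa using this
    · push_neg at hi
      have h1 : s.1 i = 0 := Nat.le_antisymm ((hNs s.1 s.2 i).trans (hN0 i hi).le) (Nat.zero_le _)
      have h2 : t.1 i = 0 := Nat.le_antisymm ((hNs t.1 t.2 i).trans (hN0 i hi).le) (Nat.zero_le _)
      rw [h1, h2]
  haveI := Fintype.ofFinite {s : ℕ →₀ ℕ // ∀ i, c * (a i * s i) < J}
  rw [tsum_fintype]
  -- rewrite each summand as a product over Fin n
  have hterm : ∀ s : {s : ℕ →₀ ℕ // ∀ i, c * (a i * s i) < J},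
      (2 : ℝ) ^ (∑ i ∈ s.1.support, (s.1 i - 1)) = ∏ i : Fin n, (2:ℝ) ^ (s.1 i.1 - 1) := by
    intro s
    have hsub : s.1.support ⊆ Finset.range n := by
      intro i hi
      rw [Finset.mem_range]
      by_contra hni
      push_neg at hni
      have h1 : s.1 i = 0 := Nat.le_antisymm ((hNs s.1 s.2 i).trans (hN0 i hni).le) (Nat.zero_le _)
      exact Finsupp.mem_support_iff.mp hi h1
    rw [Finset.sum_subset hsub (fun i _ hi => by
      simp [Finsupp.notMem_support_iff.mp hi]), ← Finset.prod_pow_eq_pow_sum, ← Fin.prod_univ_eq_prod_range]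
  calc (∑ s : {s : ℕ →₀ ℕ // ∀ i, c * (a i * s i) < J},
          (2 : ℝ) ^ (∑ i ∈ s.1.support, (s.1 i - 1)))
      = ∑ s : {s : ℕ →₀ ℕ // ∀ i, c * (a i * s i) < J},
          ∏ i : Fin n, (2:ℝ) ^ (s.1 i.1 - 1) := Finset.sum_congr rfl (fun s _ => hterm s)
    _ ≤ ∑ t ∈ Fintype.piFinset (fun i : Fin n => Finset.range (N i.1 + 1)),
          ∏ i : Fin n, (2:ℝ) ^ (t i - 1) := by
        have hinj : ∀ s ∈ (Finset.univ : Finset {s : ℕ →₀ ℕ // ∀ i, c * (a i * s i) < J}),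
            ∀ t ∈ (Finset.univ : Finset {s : ℕ →₀ ℕ // ∀ i, c * (a i * s i) < J}),
            (fun i : Fin n => s.1 i.1) = (fun i : Fin n => t.1 i.1) → s = t := by
          intro s _ t _ h
          apply Subtype.ext
          ext i
          by_cases hi : i < n
          · exact congrFun h ⟨i, hi⟩
          · push_neg at hi
            have h1 : s.1 i = 0 :=
              Nat.le_antisymm ((hNs s.1 s.2 i).trans (hN0 i hi).le) (Nat.zero_le _)
            have h2 : t.1 i = 0 :=
              Nat.le_antisymm ((hNs t.1 t.2 i).trans (hN0 i hi).le) (Nat.zero_le _)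
            rw [h1, h2]
        have himg : ∑ t ∈ Finset.image
              (fun s : {s : ℕ →₀ ℕ // ∀ i, c * (a i * s i) < J} => fun i : Fin n => s.1 i.1)
              Finset.univ, (∏ i : Fin n, (2:ℝ) ^ (t i - 1))
            = ∑ s : {s : ℕ →₀ ℕ // ∀ i, c * (a i * s i) < J},
              ∏ i : Fin n, (2:ℝ) ^ (s.1 i.1 - 1) := Finset.sum_image hinj
        rw [← himg]
        apply Finset.sum_le_sum_of_subset_of_nonneg
        · intro t ht
          rw [Finset.mem_image] at ht
          obtain ⟨s, _, rfl⟩ := ht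
          rw [Fintype.mem_piFinset]
          intro i
          rw [Finset.mem_range]
          exact Nat.lt_succ_of_le (hNs s.1 s.2 i.1)
        · intro t _ _
          positivity
    _ = ∏ i : Fin n, ∑ k ∈ Finset.range (N i.1 + 1), (2:ℝ) ^ (k - 1) :=
        (Finset.prod_univ_sum (fun i : Fin n => Finset.range (N i.1 + 1))
          (fun _ k => (2:ℝ) ^ (k - 1))).symm
    _ = ∏ i : Fin n, (2:ℝ) ^ (N i.1) := by
        apply Finset.prod_congr rfl
        intro i _
        exact geom_aux (N i.1)
    _ = (2:ℝ) ^ (∑ i : Fin n, N i.1) := by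
        rw [← Finset.prod_pow_eq_pow_sum]
    _ ≤ (2:ℝ) ^ (α * J / c) := by
        rw [show ((2:ℝ) ^ (∑ i : Fin n, N i.1)) = (2:ℝ) ^ ((∑ i : Fin n, N i.1 : ℕ) : ℝ) from
          (Real.rpow_natCast 2 _).symm]
        apply Real.rpow_le_rpow_of_exponent_le one_le_two
        push_cast
        have h1 : ∀ i : Fin n, ((N i.1 : ℝ)) ≤ J / c * (1 / a i.1) := by
          intro i
          have := Nat.floor_le (hBpos i.1)
          calc ((N i.1 : ℝ)) ≤ J / (c * a i.1) := this
            _ = J / c * (1 / a i.1) := by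
                field_simp
        calc (∑ i : Fin n, (N i.1 : ℝ)) ≤ ∑ i : Fin n, J / c * (1 / a i.1) :=
              Finset.sum_le_sum (fun i _ => h1 i)
          _ = J / c * ∑ i ∈ Finset.range n, 1 / a i := by
              rw [← Finset.mul_sum]
              exact congrArg _ (Fin.sum_univ_eq_sum_range (fun i => 1 / a i) n)
          _ ≤ J / c * α := by
              apply mul_le_mul_of_nonneg_left _ (by positivity)
              rw [hαa]
              exact Summable.sum_le_tsum _ (fun i _ => by have := ha_pos i; positivity) hsum
          _ = α * J / c := by ring
end
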